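/- arXiv:1511.07942 — 3 statements merged into one kernel-verified Lean document; each statement's English description precedes it below -/
import Mathlib

section
/- Let q be a prime power, d a positive integer with q > d, and let A be a nonempty finite family of monic polynomials of degree d over F_q. For a subset X of F_q, let S_X^A denote the set of polynomials f + a_0 with f in A and a_0 in F_q that vanish at every point of X. Then the average value set V(A) := (1/|A|) * sum over f in A of |{f(c) : c in F_q}| satisfies V(A) = (1/|A|) * sum over r from 1 to d of (-1)^{r-1} * sum over all r-element subsets X_r of F_q of |S_{X_r}^A|. -/
open Finset Polynomial

/-- inclusion–exclusion formula for the average value set of a family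
of monic polynomials of degree `d` over a finite field. -/
theorem avg_value_set_inclusion_exclusion
    {F : Type*} [Field F] [Fintype F] [DecidableEq F]
    (d : ℕ) (hd : 0 < d) (hq : d < Fintype.card F)
    (A : Finset (Polynomial F)) (hA : A.Nonempty)
    (hmon : ∀ f ∈ A, f.Monic ∧ f.natDegree = d) :
    (1 / (A.card : ℝ)) *
        ∑ f ∈ A, ((Finset.image (fun c : F => f.eval c) Finset.univ).card : ℝ)
      = (1 / (A.card : ℝ)) * ∑ r ∈ Finset.Icc 1 d, (-1 : ℝ) ^ (r - 1) *
          ∑ X ∈ Finset.powersetCard r (Finset.univ : Finset F),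
            (((A ×ˢ (Finset.univ : Finset F)).filter
                (fun p => ∀ x ∈ X, (p.1 + Polynomial.C p.2).eval x = 0)).card : ℝ) := by
  congr 1
  -- weight function
  set w : Finset F → ℝ := fun X => if X = ∅ then 0 else (-1) ^ (X.card - 1) with hw
  -- the number of pairs vanishing on X
  set N : Finset F → ℝ := fun X =>
    (((A ×ˢ (Finset.univ : Finset F)).filter
        (fun p => ∀ x ∈ X, (p.1 + Polynomial.C p.2).eval x = 0)).card : ℝ) with hN
  -- basic fact about g = f + C a for f ∈ A
  have hg : ∀ p ∈ A ×ˢ (Finset.univ : Finset F),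
      (p.1 + C p.2) ≠ 0 ∧ (p.1 + C p.2).natDegree = d := by
    rintro p hp
    obtain ⟨hmo, hdeg⟩ := hmon p.1 (Finset.mem_product.1 hp).1
    have hdlt : degree (C p.2) < degree p.1 := by
      have h1 : degree p.1 = (d : WithBot ℕ) := by
        rw [degree_eq_natDegree hmo.ne_zero, hdeg]
      rw [h1]
      exact lt_of_le_of_lt (degree_C_le) (by exact_mod_cast hd)
    refine ⟨(hmo.add_of_left hdlt).ne_zero, by rw [natDegree_add_C, hdeg]⟩
  -- Step 1: LHS as a count of pairs whose polynomial has a root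
  have step1 : ∑ f ∈ A, ((Finset.image (fun c : F => f.eval c) Finset.univ).card : ℝ)
      = ∑ p ∈ A ×ˢ (Finset.univ : Finset F),
          (if ∃ x : F, (p.1 + C p.2).eval x = 0 then (1 : ℝ) else 0) := by
    rw [Finset.sum_product]
    refine Finset.sum_congr rfl fun f hf => ?_
    have himg : (Finset.univ.filter fun a : F => ∃ x : F, (f + C a).eval x = 0)
        = (Finset.image (fun c : F => f.eval c) Finset.univ).image Neg.neg := by
      ext a
      simp only [Finset.mem_filter, Finset.mem_univ, true_and, Finset.mem_image,
        eval_add, eval_C]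
      constructor
      · rintro ⟨x, hx⟩
        exact ⟨f.eval x, ⟨x, rfl⟩, neg_eq_of_add_eq_zero_right hx⟩
      · rintro ⟨v, ⟨x, rfl⟩, hv⟩
        exact ⟨x, by rw [← hv]; ring⟩
    rw [Finset.sum_boole, himg,
      Finset.card_image_of_injective _ neg_injective]
  rw [step1]
  -- Step 2: pointwise inclusion-exclusion
  have step2 : ∀ p ∈ A ×ˢ (Finset.univ : Finset F),
      (if ∃ x : F, (p.1 + C p.2).eval x = 0 then (1 : ℝ) else 0)
      = ∑ X ∈ (Finset.univ : Finset F).powerset,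
          w X * (if ∀ x ∈ X, (p.1 + C p.2).eval x = 0 then (1 : ℝ) else 0) := by
    intro p hp
    set R : Finset F := Finset.univ.filter fun x => (p.1 + C p.2).eval x = 0 with hR
    have hsub : R.powerset ⊆ (Finset.univ : Finset F).powerset := by
      intro X hX; exact Finset.mem_powerset.2 (Finset.subset_univ X)
    have hXR : ∀ X : Finset F, (X ⊆ R) ↔ ∀ x ∈ X, (p.1 + C p.2).eval x = 0 := by
      intro X
      constructor
      · intro h x hx; exact (Finset.mem_filter.1 (h hx)).2
      · intro h x hx; exact Finset.mem_filter.2 ⟨Finset.mem_univ x, h x hx⟩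
    rw [← Finset.sum_subset hsub (fun X _ hX => by
      rw [if_neg (fun h => hX (Finset.mem_powerset.2 ((hXR X).2 h))), mul_zero])]
    have hsum : ∑ X ∈ R.powerset, w X * (if ∀ x ∈ X, (p.1 + C p.2).eval x = 0 then (1:ℝ) else 0)
        = ∑ X ∈ R.powerset, w X := by
      refine Finset.sum_congr rfl fun X hX => ?_
      rw [if_pos ((hXR X).1 (Finset.mem_powerset.1 hX)), mul_one]
    rw [hsum]
    have hsplit : ∀ X : Finset F, w X = (if X = ∅ then (1:ℝ) else 0) - (-1) ^ X.card := by
      intro X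
      by_cases h : X = ∅
      · simp [hw, h]
      · have hc : X.card - 1 + 1 = X.card :=
          Nat.succ_pred_eq_of_pos (Finset.card_pos.2 (Finset.nonempty_of_ne_empty h))
        rw [hw]
        simp only [if_neg h]
        conv_rhs => rw [← hc, pow_succ]
        ring
    simp only [hsplit]
    rw [Finset.sum_sub_distrib]
    have h1 : ∑ X ∈ R.powerset, (if X = ∅ then (1:ℝ) else 0) = 1 := by
      rw [Finset.sum_ite_eq' R.powerset (∅ : Finset F) (fun _ => (1:ℝ))]
      simp
    have h2 : ∑ X ∈ R.powerset, ((-1:ℝ)) ^ X.card = if R = ∅ then 1 else 0 := by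
      have h := @Finset.sum_powerset_neg_one_pow_card F _ R
      calc ∑ X ∈ R.powerset, ((-1:ℝ)) ^ X.card
          = ((∑ X ∈ R.powerset, (-1:ℤ) ^ X.card : ℤ) : ℝ) := by push_cast; rfl
        _ = _ := by rw [h]; split <;> simp
    rw [h1, h2]
    by_cases hRe : R = ∅
    · rw [if_pos hRe, if_neg]
      · ring
      · rintro ⟨x, hx⟩
        exact Finset.notMem_empty x (hRe ▸ Finset.mem_filter.2 ⟨Finset.mem_univ x, hx⟩)
    · rw [if_neg hRe, if_pos]
      · ring
      · obtain ⟨x, hx⟩ := Finset.nonempty_of_ne_empty hRe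
        exact ⟨x, (Finset.mem_filter.1 hx).2⟩
  rw [Finset.sum_congr rfl step2, Finset.sum_comm]
  -- Step 3: inner sum is w X * N X
  have step3 : ∀ X ∈ (Finset.univ : Finset F).powerset,
      (∑ p ∈ A ×ˢ (Finset.univ : Finset F),
        w X * (if ∀ x ∈ X, (p.1 + C p.2).eval x = 0 then (1 : ℝ) else 0)) = w X * N X := by
    intro X _
    rw [← Finset.mul_sum, Finset.sum_boole, hN]
  rw [Finset.sum_congr rfl step3]
  -- Step 4: group by cardinality
  rw [Finset.sum_powerset]
  -- N X = 0 when X.card > d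
  have hNzero : ∀ X : Finset F, d < X.card → N X = 0 := by
    intro X hX
    simp only [hN]
    norm_cast
    rw [Finset.card_eq_zero, Finset.filter_eq_empty_iff]
    intro p hp hroot
    obtain ⟨hne, hdeg⟩ := hg p hp
    have hsub : X ⊆ (p.1 + C p.2).roots.toFinset := by
      intro x hx
      rw [Multiset.mem_toFinset, mem_roots hne]
      exact hroot x hx
    have : X.card ≤ d := by
      calc X.card ≤ (p.1 + C p.2).roots.toFinset.card := Finset.card_le_card hsub
        _ ≤ Multiset.card (p.1 + C p.2).roots := Multiset.toFinset_card_le _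
        _ ≤ (p.1 + C p.2).natDegree := Polynomial.card_roots' _
        _ = d := hdeg
    omega
  have hss : Finset.Icc 1 d ⊆ Finset.range ((Finset.univ : Finset F).card + 1) := by
    intro r hr
    rw [Finset.mem_range]
    have := (Finset.mem_Icc.1 hr).2
    rw [Finset.card_univ]
    omega
  rw [← Finset.sum_subset hss]
  · refine Finset.sum_congr rfl fun r hr => ?_
    obtain ⟨hr1, hr2⟩ := Finset.mem_Icc.1 hr
    rw [Finset.mul_sum]
    refine Finset.sum_congr rfl fun X hX => ?_
    have hXc := (Finset.mem_powersetCard.1 hX).2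
    have hXne : X ≠ ∅ := by
      intro h; rw [h, Finset.card_empty] at hXc; omega
    rw [hw]
    simp only [if_neg hXne, hXc]
    rfl
  · intro r hr hr'
    rw [Finset.mem_range] at hr
    rw [Finset.mem_Icc, not_and_or] at hr'
    rcases hr' with h | h
    · have : r = 0 := by omega
      subst this
      rw [Finset.powersetCard_zero]
      simp [hw]
    · push_neg at h
      refine Finset.sum_eq_zero fun X hX => ?_
      have hXc := (Finset.mem_powersetCard.1 hX).2
      rw [hNzero X (by omega), mul_zero]
end

section
/- Let K be a field and j ≥ 1 an integer. In the polynomial ring K[T_1, T_2], the following identity holds: the partial derivative with respect to T_2 of the polynomial (T_2^j - T_1^j)/(T_2 - T_1) (which is sum over k from 0 to j-1 of T_1^k T_2^{j-1-k}) equals sum over k from 2 to j of binomial(j, k) * T_2^{j-k} * (T_1 - T_2)^{k-2}. -/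
open Finset Polynomial

lemma aux {R : Type*} [CommRing R] [IsDomain R] (x y : R) (hy : y - x ≠ 0) (j : ℕ) :
    (∑ k ∈ Finset.range j, y ^ k * x ^ (j - 1 - k))
      = ∑ k ∈ Finset.range j, (j.choose k : R) * x ^ k * (y - x) ^ (j - 1 - k) := by
  apply mul_right_cancel₀ hy
  rw [geom_sum₂_mul, Finset.sum_mul]
  rw [Finset.sum_congr rfl (fun k hk => ?_ :
    ∀ k ∈ Finset.range j, ((j.choose k : R) * x ^ k * (y - x) ^ (j - 1 - k)) * (y - x)
      = x ^ k * (y - x) ^ (j - k) * (j.choose k : R))]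
  · have hxy : y = x + (y - x) := by ring
    conv_lhs => rw [hxy, add_pow, Finset.sum_range_succ]
    simp
  · rw [Finset.mem_range] at hk
    have h : j - 1 - k + 1 = j - k := by omega
    rw [← h, pow_succ]; ring

/-- in `K[T_1][T_2]`, the `T_2`-derivative of
`(T_2^j - T_1^j)/(T_2 - T_1) = Σ_{k=0}^{j-1} T_1^k T_2^{j-1-k}` equals
`Σ_{k=2}^j C(j,k) T_2^{j-k} (T_1 - T_2)^{k-2}`. -/
theorem deriv_geom_sum_identity {K : Type*} [Field K] (j : ℕ) (hj : 1 ≤ j) :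
    Polynomial.derivative
        (∑ k ∈ Finset.range j,
          (Polynomial.C (Polynomial.X : Polynomial K)) ^ k * Polynomial.X ^ (j - 1 - k))
      = ∑ k ∈ Finset.Icc 2 j,
          ((j.choose k : ℕ) : Polynomial (Polynomial K)) * Polynomial.X ^ (j - k) *
            (Polynomial.C (Polynomial.X : Polynomial K) - Polynomial.X) ^ (k - 2) := by
  set Y : Polynomial (Polynomial K) := Polynomial.C Polynomial.X - Polynomial.X with hYdef
  have hY : Y ≠ 0 := by
    intro h
    have h0 := congrArg (fun p => Polynomial.coeff p 0) h
    simp [hYdef] at h0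
  have hderY : Polynomial.derivative Y = -1 := by
    simp [hYdef]
  rw [aux (Polynomial.X) (Polynomial.C Polynomial.X) hY j]
  rw [Polynomial.derivative_sum]
  have hterm : ∀ k ∈ Finset.range j,
      Polynomial.derivative ((j.choose k : Polynomial (Polynomial K)) * X ^ k * Y ^ (j - 1 - k))
        = ((j.choose k * k : ℕ) : Polynomial (Polynomial K)) * X ^ (k - 1) * Y ^ (j - 1 - k)
          - ((j.choose k * (j - 1 - k) : ℕ) : Polynomial (Polynomial K)) * X ^ k * Y ^ (j - 1 - k - 1) := by
    intro k _
    simp only [Polynomial.derivative_mul, Polynomial.derivative_natCast,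
      Polynomial.derivative_pow, Polynomial.derivative_X, hderY, Polynomial.C_eq_natCast]
    push_cast
    ring
  rw [Finset.sum_congr rfl hterm, Finset.sum_sub_distrib]
  obtain ⟨n, rfl⟩ : ∃ n, j = n + 1 := ⟨j - 1, by omega⟩
  rw [Finset.sum_range_succ', Finset.sum_range_succ]
  simp only [Nat.choose_zero_right, Nat.mul_zero, Nat.zero_mul, Nat.cast_zero, zero_mul,
    add_zero, Nat.sub_self, mul_zero]
  have e1 : (n + 1 - 1 - n) = 0 := by omega
  rw [e1]
  simp only [Nat.mul_zero, Nat.cast_zero, zero_mul, sub_zero, mul_zero, add_zero]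
  rw [← Finset.sum_sub_distrib]
  have key : ∀ i ∈ Finset.range n,
      (((n + 1).choose (i+1) * (i+1) : ℕ) : Polynomial (Polynomial K)) * X ^ (i + 1 - 1) * Y ^ (n + 1 - 1 - (i+1))
        - (((n + 1).choose i * (n + 1 - 1 - i) : ℕ) : Polynomial (Polynomial K)) * X ^ i * Y ^ (n + 1 - 1 - i - 1)
      = (((n + 1).choose i : ℕ) : Polynomial (Polynomial K)) * X ^ i * Y ^ (n - 1 - i) := by
    intro i hi
    rw [Finset.mem_range] at hi
    have e2 : n + 1 - 1 - (i + 1) = n - 1 - i := by omega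
    have e3 : n + 1 - 1 - i - 1 = n - 1 - i := by omega
    have e4 : n + 1 - 1 - i = (n - 1 - i) + 1 := by omega
    have e5 : i + 1 - 1 = i := by omega
    have hch : ((n+1).choose (i+1) * (i+1) : ℕ) = (n+1).choose i * (n - 1 - i) + (n+1).choose i + (n+1).choose i := by
      have h1 := Nat.choose_succ_right_eq (n+1) i
      have h2 : n + 1 - i = (n - 1 - i) + 2 := by omega
      rw [h2] at h1
      rw [h1]; ring
    rw [e2, e3, e4, e5, hch]
    push_cast
    ring
  rw [Finset.sum_congr rfl key]
  -- reindex: i ↦ n + 1 - i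
  refine Finset.sum_nbij' (fun i => n + 1 - i) (fun k => n + 1 - k) ?_ ?_ ?_ ?_ ?_
  · intro a ha; rw [Finset.mem_range] at ha; rw [Finset.mem_Icc]; omega
  · intro b hb; rw [Finset.mem_Icc] at hb; rw [Finset.mem_range]; omega
  · intro a ha; rw [Finset.mem_range] at ha; omega
  · intro b hb; rw [Finset.mem_Icc] at hb; omega
  · intro a ha; rw [Finset.mem_range] at ha
    have h1 : n + 1 - (n + 1 - a) = a := by omega
    have h2 : n + 1 - a - 2 = n - 1 - a := by omega
    rw [h1, h2, Nat.choose_symm (by omega : a ≤ n + 1)]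
end

section
/- For every integer d ≥ 2, sum over k from 0 to d-1 of binomial(d, k)^2 * (d - k)! ≤ (5/2) * e^{109/30} * d^{d+1} * e^{2*sqrt(d)} / (sqrt(2*pi) * e^d). -/
/-- `Σ_{k=0}^{d-1} C(d,k)² (d-k)! ≤ (5/2) e^{109/30} d^{d+1} e^{2√d} / (√(2π) e^d)`. -/
theorem sum_choose_sq_factorial_bound (d : ℕ) (hd : 2 ≤ d) :
    (∑ k ∈ Finset.range d, ((d.choose k) ^ 2 * (d - k).factorial : ℝ))
      ≤ (5 / 2) * Real.exp (109 / 30) * (d : ℝ) ^ (d + 1) *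
          Real.exp (2 * Real.sqrt d) / (Real.sqrt (2 * Real.pi) * Real.exp d) := by
  have hd1 : (1:ℝ) ≤ (d:ℝ) := by exact_mod_cast Nat.one_le_iff_ne_zero.mpr (by omega)
  have hdpos : (0:ℝ) < d := lt_of_lt_of_le one_pos hd1
  set sd := Real.sqrt d with hsddef
  have hsdnn : 0 ≤ sd := Real.sqrt_nonneg _
  have hsdsq : sd ^ 2 = (d:ℝ) := Real.sq_sqrt hdpos.le
  -- Step 1: termwise bound in ℕ
  have hnat : ∀ k, k ≤ d →
      (d.choose k)^2 * (d-k).factorial * (k.factorial)^2 ≤ d.factorial * d^k := by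
    intro k hk
    calc (d.choose k)^2 * (d-k).factorial * (k.factorial)^2
        = (d.choose k * k.factorial * (d-k).factorial) * (k.factorial * d.choose k) := by ring
      _ = d.factorial * d.descFactorial k := by
          rw [Nat.choose_mul_factorial_mul_factorial hk,
            Nat.descFactorial_eq_factorial_mul_choose]
      _ ≤ d.factorial * d^k := Nat.mul_le_mul_left _ (Nat.descFactorial_le_pow _ _)
  -- Step 2: termwise bound in ℝ
  have hterm : ∀ k ∈ Finset.range d, ((d.choose k) ^ 2 * (d - k).factorial : ℝ)
      ≤ (d.factorial : ℝ) * ((sd ^ k / (k.factorial : ℝ)) ^ 2) := by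
    intro k hk
    have hk' : k ≤ d := (Finset.mem_range.mp hk).le
    have hkf : (0:ℝ) < ((k.factorial : ℝ))^2 := by positivity
    rw [div_pow, ← mul_div_assoc, le_div_iff₀ hkf, ← pow_mul, mul_comm k 2, pow_mul, hsdsq]
    exact_mod_cast hnat k hk'
  -- Step 3: sum bound
  have hsum : (∑ k ∈ Finset.range d, ((d.choose k) ^ 2 * (d - k).factorial : ℝ))
      ≤ (d.factorial : ℝ) * Real.exp (2 * sd) := by
    calc (∑ k ∈ Finset.range d, ((d.choose k) ^ 2 * (d - k).factorial : ℝ))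
        ≤ ∑ k ∈ Finset.range d, (d.factorial : ℝ) * ((sd ^ k / (k.factorial : ℝ)) ^ 2) :=
          Finset.sum_le_sum hterm
      _ = (d.factorial : ℝ) * ∑ k ∈ Finset.range d, (sd ^ k / (k.factorial : ℝ)) ^ 2 := by
          rw [Finset.mul_sum]
      _ ≤ (d.factorial : ℝ) * (∑ k ∈ Finset.range d, sd ^ k / (k.factorial : ℝ)) ^ 2 := by
          refine mul_le_mul_of_nonneg_left ?_ (by positivity)
          exact Finset.sum_sq_le_sq_sum_of_nonneg (fun i _ => by positivity)
      _ ≤ (d.factorial : ℝ) * (Real.exp sd) ^ 2 := by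
          refine mul_le_mul_of_nonneg_left ?_ (by positivity)
          have h1 := Real.sum_le_exp_of_nonneg hsdnn d
          have h2 : (0:ℝ) ≤ ∑ k ∈ Finset.range d, sd ^ k / (k.factorial : ℝ) :=
            Finset.sum_nonneg fun i _ => by positivity
          exact pow_le_pow_left₀ h2 h1 2
      _ = (d.factorial : ℝ) * Real.exp (2 * sd) := by
          rw [sq, ← Real.exp_add, two_mul]
  -- Step 4: Stirling upper bound  d! ≤ e √d (d/e)^d
  have hstir : (d.factorial : ℝ) ≤ Real.exp 1 * sd * ((d:ℝ) / Real.exp 1) ^ d := by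
    have h1 : Stirling.stirlingSeq d ≤ Real.exp 1 / Real.sqrt 2 := by
      obtain ⟨n, rfl⟩ : ∃ n, d = n + 1 := ⟨d - 1, by omega⟩
      rw [← Stirling.stirlingSeq_one]
      exact Stirling.stirlingSeq'_antitone (Nat.zero_le n)
    have hpos : (0:ℝ) < Real.sqrt (2 * d) * ((d:ℝ) / Real.exp 1) ^ d := by positivity
    have h2 : (d.factorial : ℝ) ≤ Real.exp 1 / Real.sqrt 2 *
        (Real.sqrt (2 * d) * ((d:ℝ) / Real.exp 1) ^ d) := by
      have := (div_le_iff₀ hpos).mp h1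
      simpa [Stirling.stirlingSeq] using this
    refine h2.trans_eq ?_
    rw [show (2:ℝ) * d = 2 * d by ring, Real.sqrt_mul (by norm_num : (0:ℝ) ≤ 2)]
    have h2ne : Real.sqrt 2 ≠ 0 := by positivity
    field_simp
    ring
  -- Step 5: numeric comparison
  have hsdle : sd ≤ (d:ℝ) := by
    rw [hsddef]
    nlinarith [Real.sq_sqrt hdpos.le, Real.sqrt_nonneg (d:ℝ), hd1]
  have hnum : Real.exp 1 * Real.sqrt (2 * Real.pi) ≤ (5/2) * Real.exp (109/30) := by
    have hpi : Real.pi < 3.15 := Real.pi_lt_d2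
    have hsq : Real.sqrt (2 * Real.pi) ≤ 2.51 := by
      rw [Real.sqrt_le_iff]
      constructor
      · norm_num
      · nlinarith
    have he : Real.exp 1 < 2.7182818286 := Real.exp_one_lt_d9
    have h3 : (4:ℝ) ≤ Real.exp (109/30) := by
      have := Real.add_one_le_exp (3 : ℝ)
      have hmono : Real.exp 3 ≤ Real.exp (109/30) := Real.exp_le_exp.mpr (by norm_num)
      linarith
    nlinarith [Real.exp_pos (1:ℝ), Real.sqrt_nonneg (2 * Real.pi)]
  -- Assemble
  have hexp : ((d:ℝ) / Real.exp 1) ^ d = (d:ℝ) ^ d / Real.exp d := by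
    rw [div_pow]
    congr 1
    rw [← Real.exp_nat_mul, mul_one]
  have h2pi : (0:ℝ) < Real.sqrt (2 * Real.pi) := Real.sqrt_pos.mpr (by positivity)
  have hmain : Real.exp 1 * sd * ((d:ℝ) / Real.exp 1) ^ d
      ≤ (5/2) * Real.exp (109/30) * (d:ℝ) ^ (d+1) / (Real.sqrt (2 * Real.pi) * Real.exp d) := by
    rw [hexp, pow_succ, ← mul_div_assoc]
    rw [div_le_div_iff₀ (by positivity) (by positivity)]
    have hdd : (0:ℝ) < (d:ℝ) ^ d := by positivity
    have hed : (0:ℝ) < Real.exp d := Real.exp_pos _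
    have key : Real.exp 1 * sd * Real.sqrt (2 * Real.pi) ≤ (5/2) * Real.exp (109/30) * d := by
      calc Real.exp 1 * sd * Real.sqrt (2 * Real.pi)
          ≤ Real.exp 1 * (d:ℝ) * Real.sqrt (2 * Real.pi) :=
            mul_le_mul_of_nonneg_right
              (mul_le_mul_of_nonneg_left hsdle (Real.exp_pos 1).le) h2pi.le
        _ = (Real.exp 1 * Real.sqrt (2 * Real.pi)) * d := by ring
        _ ≤ ((5/2) * Real.exp (109/30)) * d := by
            exact mul_le_mul_of_nonneg_right hnum hdpos.le
        _ = (5/2) * Real.exp (109/30) * d := by ring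
    nlinarith [hdd, hed, key, hsdnn, h2pi, (Real.exp_pos 1).le,
      mul_le_mul_of_nonneg_right key (mul_pos hdd hed).le]
  calc (∑ k ∈ Finset.range d, ((d.choose k) ^ 2 * (d - k).factorial : ℝ))
      ≤ (d.factorial : ℝ) * Real.exp (2 * sd) := hsum
    _ ≤ (Real.exp 1 * sd * ((d:ℝ) / Real.exp 1) ^ d) * Real.exp (2 * sd) :=
        mul_le_mul_of_nonneg_right hstir (Real.exp_pos _).le
    _ ≤ ((5/2) * Real.exp (109/30) * (d:ℝ) ^ (d+1) / (Real.sqrt (2 * Real.pi) * Real.exp d))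
          * Real.exp (2 * sd) :=
        mul_le_mul_of_nonneg_right hmain (Real.exp_pos _).le
    _ = (5 / 2) * Real.exp (109 / 30) * (d : ℝ) ^ (d + 1) *
          Real.exp (2 * sd) / (Real.sqrt (2 * Real.pi) * Real.exp d) := by
        ring
end
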